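/- Define an occurrence partition of a pattern P with respect to a text T as a sequence (P₁, …, P_k) of nonempty strings with P = P₁∘…∘P_k such that each P_i either occurs as a substring of T or has length 1, and for each i < k the concatenation P_i∘P_{i+1} does not occur in T. Assuming every character of P occurs in T: P occurs in T if and only if every occurrence partition of P has size one. -/

import Mathlib

/-- An occurrence partition of a pattern with respect to a text `T`:
nonempty pieces, each occurring in `T` as a contiguous substring or of length 1,
with no two adjacent pieces whose concatenation occurs in `T`. -/
def IsOccPartition {α : Type*} (T : List α) (L : List (List α)) : Prop :=
  (∀ Q ∈ L, Q ≠ []) ∧ (∀ Q ∈ L, Q <:+: T ∨ Q.length = 1) ∧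
  ∀ i : ℕ, (h : i + 1 < L.length) →
    ¬ ((L.get ⟨i, Nat.lt_of_succ_lt h⟩ ++ L.get ⟨i + 1, h⟩) <:+: T)

lemma isOccPartition_iff {α : Type*} (T : List α) (L : List (List α)) :
    IsOccPartition T L ↔ (∀ Q ∈ L, Q ≠ []) ∧ (∀ Q ∈ L, Q <:+: T ∨ Q.length = 1) ∧
      List.IsChain (fun a b => ¬ ((a ++ b) <:+: T)) L := by
  unfold IsOccPartition
  rw [List.isChain_iff_getElem]
  refine and_congr_right fun _ => and_congr_right fun _ => ⟨fun h i hi => h i (by omega), fun h i hi => h i (by omega)⟩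

lemma exists_occPartition {α : Type*} (T : List α) :
    ∀ P : List α, P ≠ [] → ∃ L, IsOccPartition T L ∧ L.flatten = P := by
  intro P
  induction P with
  | nil => simp
  | cons c P' ih =>
    intro _
    by_cases hP' : P' = []
    · subst hP'
      refine ⟨[[c]], ?_, by simp⟩
      rw [isOccPartition_iff]
      exact ⟨by simp, by simp, by simp⟩
    · obtain ⟨L', hL', hf⟩ := ih hP'
      rw [isOccPartition_iff] at hL'
      obtain ⟨hne, hocc, hch⟩ := hL'
      match L', hf, hne, hocc, hch with
      | [], hf, _, _, _ => exact absurd hf.symm hP'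
      | Q :: M, hf, hne, hocc, hch =>
        rw [List.isChain_cons] at hch
        obtain ⟨hhd, hchM⟩ := hch
        by_cases h : (c :: Q) <:+: T
        · refine ⟨(c :: Q) :: M, ?_, ?_⟩
          · rw [isOccPartition_iff, List.isChain_cons]
            refine ⟨?_, ?_, ?_, hchM⟩
            · intro Q' hQ'
              rcases List.mem_cons.1 hQ' with h' | h'
              · subst h'; simp
              · exact hne _ (List.mem_cons_of_mem _ h')
            · intro Q' hQ'
              rcases List.mem_cons.1 hQ' with h' | h'
              · subst h'; exact Or.inl h
              · exact hocc _ (List.mem_cons_of_mem _ h')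
            · intro b hb hinf
              apply hhd b hb
              refine List.IsInfix.trans ?_ hinf
              exact ((List.suffix_cons c (Q ++ b)).isInfix)
          · simp only [List.flatten_cons] at hf ⊢
            simp [hf]
        · refine ⟨[c] :: Q :: M, ?_, ?_⟩
          · rw [isOccPartition_iff, List.isChain_cons_cons]
            refine ⟨?_, ?_, ?_, List.isChain_cons.2 ⟨hhd, hchM⟩⟩
            · intro Q' hQ'
              rcases List.mem_cons.1 hQ' with h' | h'
              · subst h'; simp
              · exact hne _ h'
            · intro Q' hQ'
              rcases List.mem_cons.1 hQ' with h' | h'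
              · subst h'; right; simp
              · exact hocc _ h'
            · simpa using h
          · simp only [List.flatten_cons] at hf ⊢
            simp [hf]

theorem stmt10 {α : Type*} (T P : List α) (hP : P ≠ [])
    (hchar : ∀ c ∈ P, [c] <:+: T) :
    (P <:+: T) ↔
      ∀ L : List (List α), IsOccPartition T L → L.flatten = P → L.length = 1 := by
  constructor
  · intro hPT L hL hflat
    rw [isOccPartition_iff] at hL
    obtain ⟨hne, hocc, hch⟩ := hL
    match L, hflat, hch with
    | [], hflat, _ => exact absurd hflat.symm hP
    | [A], _, _ => rfl
    | A :: B :: M, hflat, hch =>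
      exfalso
      rw [List.isChain_cons_cons] at hch
      apply hch.1
      refine List.IsInfix.trans ?_ hPT
      rw [← hflat]
      simp only [List.flatten_cons, ← List.append_assoc]
      exact (List.prefix_append (A ++ B) _).isInfix
  · intro hall
    obtain ⟨L, hL, hflat⟩ := exists_occPartition T P hP
    have hlen := hall L hL hflat
    match L, hflat, hlen with
    | [Q], hflat, _ =>
      simp only [List.flatten_cons, List.flatten_nil, List.append_nil] at hflat
      subst hflat
      rw [isOccPartition_iff] at hL
      rcases hL.2.1 Q (by simp) with h | h
      · exact h
      · match Q, h with
        | [c], _ => exact hchar c (by simp)
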